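/- The set of isolated points of R * A_n consists exactly of those functions f ∈ R * A_n with |supp f| = n. -/

import Mathlib

open Filter Topology

def RA (R : Set ℝ) (n : ℕ) : Set (ℕ → ℝ) :=
  {f | (∀ i, f i ∈ R) ∧ ∃ F : Finset ℕ, F.card ≤ n ∧ ∀ i, f i ≠ 0 → i ∈ F}

/-- A point of `R * 𝒜_n` is isolated in `R * 𝒜_n` exactly when its support has
cardinality exactly `n`. -/
theorem isolated_RA_iff (R : Set ℝ) (hc : R.Countable) (hcomp : IsCompact R)
    (hpos : R ⊆ Set.Ici 0) (h0 : (0 : ℝ) ∈ R) (hne : R ≠ {0})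
    (hacc : ∀ x : ℝ, AccPt x (𝓟 R) ↔ x = 0)
    (n : ℕ) (f : ℕ → ℝ) (hf : f ∈ RA R n) :
    ¬ AccPt f (𝓟 (RA R n)) ↔ ∃ F : Finset ℕ, (∀ i, f i ≠ 0 ↔ i ∈ F) ∧ F.card = n := by
  obtain ⟨hfR, F₀, hF₀card, hF₀⟩ := hf
  set F : Finset ℕ := F₀.filter (fun i => f i ≠ 0) with hFdef
  have hFmem : ∀ i, f i ≠ 0 ↔ i ∈ F := by
    intro i
    simp only [hFdef, Finset.mem_filter]
    exact ⟨fun h => ⟨hF₀ i h, h⟩, fun h => h.2⟩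
  have hFcard : F.card ≤ n :=
    le_trans (Finset.card_le_card (Finset.filter_subset _ _)) hF₀card
  constructor
  · intro hnacc
    refine ⟨F, hFmem, ?_⟩
    by_contra hne'
    have hlt : F.card < n := lt_of_le_of_ne hFcard hne'
    apply hnacc
    obtain ⟨r, hrR, hr0⟩ : ∃ r ∈ R, r ≠ 0 := by
      by_contra hcon
      push_neg at hcon
      exact hne (Set.Subset.antisymm (fun x hx => hcon x hx)
        (fun x hx => hx ▸ h0))
    rw [accPt_iff_nhds]
    intro U hU
    rw [nhds_pi, Filter.mem_pi] at hU
    obtain ⟨I, hIfin, t, ht, hsub⟩ := hU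
    obtain ⟨j, hj⟩ : ∃ j, j ∉ I ∪ (F : Set ℕ) :=
      ((hIfin.union F.finite_toSet).infinite_compl).nonempty
    have hjI : j ∉ I := fun h => hj (Or.inl h)
    have hjF : j ∉ F := fun h => hj (Or.inr h)
    have hfj : f j = 0 := by
      by_contra h; exact hjF ((hFmem j).mp h)
    refine ⟨Function.update f j r, ⟨?_, ?_, ?_⟩, ?_⟩
    · apply hsub
      intro i hi
      have hij : i ≠ j := fun h => hjI (h ▸ hi)
      rw [Function.update_of_ne hij]
      exact mem_of_mem_nhds (ht i)
    · intro i
      rcases eq_or_ne i j with rfl | hij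
      · simpa using hrR
      · rw [Function.update_of_ne hij]; exact hfR i
    · refine ⟨insert j F, ?_, ?_⟩
      · calc (insert j F).card ≤ F.card + 1 := Finset.card_insert_le _ _
          _ ≤ n := hlt
      · intro i hi
        rcases eq_or_ne i j with rfl | hij
        · exact Finset.mem_insert_self _ _
        · rw [Function.update_of_ne hij] at hi
          exact Finset.mem_insert_of_mem ((hFmem i).mp hi)
    · intro h
      have : r = f j := by
        have := congrFun h j
        simpa using this
      exact hr0 (this.trans hfj)
  · rintro ⟨F', hF', hF'card⟩ hacc'
    have hiso : ∀ i : ℕ, ∃ V ∈ 𝓝 (f i), ∀ y ∈ V ∩ R, i ∈ F' → y = f i := by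
      intro i
      by_cases hi : i ∈ F'
      · have hne0 : f i ≠ 0 := (hF' i).mpr hi
        have hnacc : ¬ AccPt (f i) (𝓟 R) := fun h => hne0 ((hacc _).mp h)
        rw [accPt_iff_nhds] at hnacc
        push_neg at hnacc
        obtain ⟨V, hV, hVspec⟩ := hnacc
        exact ⟨V, hV, fun y hy _ => hVspec y hy⟩
      · exact ⟨Set.univ, Filter.univ_mem, fun y _ h => absurd h hi⟩
    choose V hV hVspec using hiso
    have hU : (⋂ i ∈ F', (fun g : ℕ → ℝ => g i) ⁻¹' V i) ∈ 𝓝 f := by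
      refine (Filter.biInter_finset_mem F').mpr fun i _ => ?_
      exact (continuous_apply i).continuousAt.preimage_mem_nhds (hV i)
    obtain ⟨y, ⟨hyU, hyR, G, hGcard, hG⟩, hyne⟩ :=
      accPt_iff_nhds.mp hacc' _ hU
    apply hyne
    have hyF : ∀ i ∈ F', y i = f i := by
      intro i hi
      have : y i ∈ V i := by
        have := Set.mem_iInter₂.mp hyU i hi
        exact this
      exact hVspec i (y i) ⟨this, hyR i⟩ hi
    have hsub : F' ⊆ G := by
      intro i hi
      apply hG
      rw [hyF i hi]
      exact (hF' i).mpr hi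
    have hFG : F' = G :=
      Finset.eq_of_subset_of_card_le hsub (hGcard.trans_eq hF'card.symm)
    funext i
    by_cases hi : i ∈ F'
    · exact hyF i hi
    · have hy0 : y i = 0 := by
        by_contra h
        exact hi (hFG ▸ hG i h)
      have hf0 : f i = 0 := by
        by_contra h
        exact hi ((hF' i).mp h)
      rw [hy0, hf0]
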